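/- Let f ∈ L¹(ℝ³) and let u_f(t,x) := (t/4π) ∫_{S²} f(x + tω) dσ(ω) be the free sine wave propagator applied to f. Then the function x ↦ ∫_0^∞ |u_f(t,x)| dt belongs to weak-L³(ℝ³), with ‖ x ↦ ∫_0^∞ |u_f(t,x)| dt ‖_{L^{3,∞}(ℝ³)} ≤ C ‖f‖_{L¹(ℝ³)} for an absolute constant C; this is the reversed space-time estimate ‖ sin(t√(−Δ))/√(−Δ) f ‖_{L^{3,∞}_x L¹_t} ≲ ‖f‖_{L¹}. -/

import Mathlib

set_option autoImplicit false
set_option maxHeartbeats 1000000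

open MeasureTheory ENNReal NNReal Real

noncomputable section

/-- `ℝ³` as a Euclidean space. -/
abbrev R3 : Type := EuclideanSpace ℝ (Fin 3)

/-- The surface measure on the unit sphere `S² ⊂ ℝ³`. -/
def sphereMeasure : Measure (Metric.sphere (0 : R3) 1) :=
  (volume : Measure R3).toSphere

/-- The free sine wave propagator (Kirchhoff formula):
`u_f(t,x) = (t/4π) ∫_{S²} f(x + tω) dσ(ω)`. -/
def sinProp (f : R3 → ℂ) (t : ℝ) (x : R3) : ℂ :=
  (t / (4 * π)) • ∫ ω : Metric.sphere (0 : R3) 1, f (x + t • (ω : R3)) ∂sphereMeasure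

/-- The weak-`L³` quasinorm of a nonnegative (extended-real-valued) function on `ℝ³`:
`sup_{α>0} α · |{x : g(x) > α}|^{1/3}`. -/
def weakL3Norm (g : R3 → ℝ≥0∞) : ℝ≥0∞ :=
  ⨆ (α : ℝ≥0) (_ : 0 < α), (α : ℝ≥0∞) * volume {x : R3 | (α : ℝ≥0∞) < g x} ^ ((1 : ℝ) / 3)

/-- total sphere measure -/
def sigmaU : ℝ≥0∞ := sphereMeasure Set.univ

instance : IsFiniteMeasure sphereMeasure :=
  inferInstanceAs (IsFiniteMeasure (volume : Measure R3).toSphere)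

lemma sigmaU_ne_top : sigmaU ≠ ∞ := measure_ne_top _ _

lemma polar_prod (g : R3 → ℝ≥0∞) (hg : Measurable g) :
    ∫⁻ y, g y = ∫⁻ p : Metric.sphere (0:R3) 1 × Set.Ioi (0:ℝ),
      g ((p.2 : ℝ) • (p.1 : R3)) ∂(sphereMeasure.prod (Measure.volumeIoiPow 2)) := by
  have hdim : Module.finrank ℝ R3 = 3 := by simp
  have mp := (volume : Measure R3).measurePreserving_homeomorphUnitSphereProd
  rw [hdim] at mp
  have hG : Measurable fun p : Metric.sphere (0:R3) 1 × Set.Ioi (0:ℝ) =>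
      g ((p.2 : ℝ) • (p.1 : R3)) := by fun_prop
  have := mp.lintegral_comp hG
  rw [show (3 - 1 : ℕ) = 2 from rfl] at this
  rw [sphereMeasure, ← this]
  have hcongr : ∀ z : ({0}ᶜ : Set R3),
      g ((((homeomorphUnitSphereProd R3) z).2 : ℝ) • (((homeomorphUnitSphereProd R3) z).1 : R3))
        = g (z : R3) := by
    intro z
    congr 1
    have h2 : (homeomorphUnitSphereProd R3).symm ((homeomorphUnitSphereProd R3) z) = z :=
      Homeomorph.symm_apply_apply _ z
    have := congrArg (Subtype.val) h2
    rwa [homeomorphUnitSphereProd_symm_apply_coe] at this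
  calc ∫⁻ y, g y = ∫⁻ y in ({0}ᶜ : Set R3), g y := by
        rw [restrict_compl_singleton]
    _ = ∫⁻ z : ({0}ᶜ : Set R3), g (z : R3) ∂((volume : Measure R3).comap Subtype.val) := by
        rw [lintegral_subtype_comap (measurableSet_singleton _).compl]
    _ = _ := by
        refine lintegral_congr fun z => (hcongr z).symm

/-- iterated polar coordinates with translation -/
lemma key_identity (φ : R3 → ℝ≥0∞) (hφ : Measurable φ) (x : R3) :
    ∫⁻ t in Set.Ioi (0:ℝ), (ENNReal.ofReal t) *
        ∫⁻ ω : Metric.sphere (0:R3) 1, φ (x + t • (ω : R3)) ∂sphereMeasure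
      = ∫⁻ y, φ y * ((‖y - x‖₊ : ℝ≥0∞))⁻¹ := by
  have hg : Measurable fun y : R3 => φ (x + y) * ((‖y‖₊ : ℝ≥0∞))⁻¹ := by fun_prop
  have htrans : ∫⁻ y, φ y * ((‖y - x‖₊ : ℝ≥0∞))⁻¹
      = ∫⁻ y, φ (x + y) * ((‖y‖₊ : ℝ≥0∞))⁻¹ := by
    rw [← lintegral_add_left_eq_self (fun y : R3 => φ y * ((‖y - x‖₊ : ℝ≥0∞))⁻¹) x]
    refine lintegral_congr fun y => ?_
    simp [add_sub_cancel_left]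
  rw [htrans, polar_prod _ hg]
  have hGm : Measurable fun p : Metric.sphere (0:R3) 1 × Set.Ioi (0:ℝ) =>
      φ (x + (p.2 : ℝ) • (p.1 : R3)) * ((‖(p.2 : ℝ) • (p.1 : R3)‖₊ : ℝ≥0∞))⁻¹ := by fun_prop
  rw [lintegral_prod _ hGm.aemeasurable]
  -- inner integral over volumeIoiPow 2
  have hinner : ∀ ω : Metric.sphere (0:R3) 1,
      (∫⁻ r : Set.Ioi (0:ℝ), φ (x + (r : ℝ) • (ω : R3)) *
          ((‖(r : ℝ) • (ω : R3)‖₊ : ℝ≥0∞))⁻¹ ∂(Measure.volumeIoiPow 2))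
        = ∫⁻ r in Set.Ioi (0:ℝ), ENNReal.ofReal r * φ (x + r • (ω : R3)) := by
    intro ω
    rw [Measure.volumeIoiPow,
      lintegral_withDensity_eq_lintegral_mul _ (by fun_prop) (by fun_prop)]
    simp only [Pi.mul_apply]
    rw [lintegral_subtype_comap measurableSet_Ioi
      (fun r : ℝ => ENNReal.ofReal (r^2) * (φ (x + r • (ω : R3)) * ((‖r • (ω : R3)‖₊ : ℝ≥0∞))⁻¹))]
    refine setLIntegral_congr_fun measurableSet_Ioi (fun r hr => ?_)
    have hr' : (0:ℝ) < r := hr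
    have hnorm : (‖r • (ω : R3)‖₊ : ℝ≥0∞) = ENNReal.ofReal r := by
      rw [← enorm_eq_nnnorm, ← ofReal_norm, norm_smul]
      simp [abs_of_pos hr', (mem_sphere_zero_iff_norm.1 ω.2)]
    have h0 : ENNReal.ofReal r ≠ 0 := by simp [hr'.le, hr']
    have hT : ENNReal.ofReal r ≠ ∞ := ofReal_ne_top
    rw [hnorm]
    have : ENNReal.ofReal (r^2) = ENNReal.ofReal r * ENNReal.ofReal r := by
      rw [← ENNReal.ofReal_mul hr'.le]; ring_nf
    rw [this]
    calc ENNReal.ofReal r * ENNReal.ofReal r *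
          (φ (x + r • (ω : R3)) * (ENNReal.ofReal r)⁻¹)
        = ENNReal.ofReal r * φ (x + r • (ω : R3)) *
            (ENNReal.ofReal r * (ENNReal.ofReal r)⁻¹) := by ring
      _ = ENNReal.ofReal r * φ (x + r • (ω : R3)) := by
          rw [ENNReal.mul_inv_cancel h0 hT, mul_one]
  simp only [hinner]
  -- swap
  rw [lintegral_lintegral_swap (by fun_prop)]
  refine lintegral_congr fun t => ?_
  rw [lintegral_const_mul _ (by fun_prop)]

lemma sphere_ae (x : R3) {N : Set R3} (hNm : MeasurableSet N) (hN0 : volume N = 0) :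
    ∀ᵐ t ∂((volume : Measure ℝ).restrict (Set.Ioi (0:ℝ))),
      ∀ᵐ ω : Metric.sphere (0:R3) 1 ∂sphereMeasure, x + t • (ω : R3) ∉ N := by
  have hφ : Measurable (N.indicator (1 : R3 → ℝ≥0∞)) := measurable_one.indicator hNm
  have hzero : ∫⁻ y, N.indicator (1 : R3 → ℝ≥0∞) y * ((‖y - x‖₊ : ℝ≥0∞))⁻¹ = 0 := by
    refine le_antisymm ?_ zero_le
    calc ∫⁻ y, N.indicator (1 : R3 → ℝ≥0∞) y * ((‖y - x‖₊ : ℝ≥0∞))⁻¹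
        ≤ ∫⁻ y, N.indicator (fun _ => (∞ : ℝ≥0∞)) y := by
          refine lintegral_mono fun y => ?_
          by_cases hy : y ∈ N <;>
            simp [Set.indicator_of_mem, Set.indicator_of_notMem, hy]
      _ = ∫⁻ y in N, (∞ : ℝ≥0∞) ∂(volume : Measure R3) := lintegral_indicator hNm _
      _ = 0 := by rw [setLIntegral_const, hN0, mul_zero]
  have h0 : ∫⁻ t in Set.Ioi (0:ℝ), (ENNReal.ofReal t) *
      ∫⁻ ω : Metric.sphere (0:R3) 1, N.indicator (1 : R3 → ℝ≥0∞) (x + t • (ω : R3))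
        ∂sphereMeasure = 0 := (key_identity _ hφ x).trans hzero
  have hm : Measurable fun t : ℝ => (ENNReal.ofReal t) *
      ∫⁻ ω : Metric.sphere (0:R3) 1, N.indicator (1 : R3 → ℝ≥0∞) (x + t • (ω : R3))
        ∂sphereMeasure := by
    refine Measurable.mul (by fun_prop) ?_
    exact Measurable.lintegral_prod_right (f := fun (t : ℝ) (ω : Metric.sphere (0:R3) 1) =>
      N.indicator (1 : R3 → ℝ≥0∞) (x + t • (ω : R3))) (hφ.comp (by fun_prop))
  rw [lintegral_eq_zero_iff hm] at h0
  filter_upwards [h0, ae_restrict_mem measurableSet_Ioi] with t ht htpos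
  simp only [Pi.zero_apply] at ht
  have h1 : ∫⁻ ω : Metric.sphere (0:R3) 1,
      N.indicator (1 : R3 → ℝ≥0∞) (x + t • (ω : R3)) ∂sphereMeasure = 0 := by
    rcases mul_eq_zero.1 ht with h | h
    · rw [ENNReal.ofReal_eq_zero] at h
      exact absurd (Set.mem_Ioi.1 htpos) (not_lt.2 h)
    · exact h
  have hmeas : Measurable fun ω : Metric.sphere (0:R3) 1 =>
      N.indicator (1 : R3 → ℝ≥0∞) (x + t • (ω : R3)) := hφ.comp (by fun_prop)
  rw [lintegral_eq_zero_iff hmeas] at h1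
  filter_upwards [h1] with ω hω
  intro hmem
  simp only [Pi.zero_apply, Set.indicator_apply_eq_zero, Pi.one_apply] at hω
  exact one_ne_zero (hω hmem)

lemma pointwise_bound (f : R3 → ℂ) (φ : R3 → ℝ≥0∞)
    (hφ : Measurable φ) {N : Set R3} (hNm : MeasurableSet N) (hN0 : volume N = 0)
    (hfN : ∀ y ∉ N, (‖f y‖₊ : ℝ≥0∞) = φ y) (x : R3) :
    ∫⁻ t in Set.Ioi (0:ℝ), (‖sinProp f t x‖₊ : ℝ≥0∞)
      ≤ ∫⁻ y, φ y * ((‖y - x‖₊ : ℝ≥0∞))⁻¹ := by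
  rw [← key_identity φ hφ x]
  refine lintegral_mono_ae ?_
  filter_upwards [ae_restrict_mem measurableSet_Ioi, sphere_ae x hNm hN0] with t ht htN
  have htpos : (0:ℝ) < t := ht
  have h2 : ∫⁻ ω : Metric.sphere (0:R3) 1, (‖f (x + t • (ω : R3))‖₊ : ℝ≥0∞) ∂sphereMeasure
      = ∫⁻ ω : Metric.sphere (0:R3) 1, φ (x + t • (ω : R3)) ∂sphereMeasure :=
    lintegral_congr_ae (htN.mono fun ω hω => hfN _ hω)
  calc (‖sinProp f t x‖₊ : ℝ≥0∞)
      = (ENNReal.ofReal (t / (4*π))) *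
          (‖∫ ω : Metric.sphere (0:R3) 1, f (x + t • (ω : R3)) ∂sphereMeasure‖₊ : ℝ≥0∞) := by
        rw [sinProp, nnnorm_smul, ENNReal.coe_mul,
          ← enorm_eq_nnnorm, Real.enorm_eq_ofReal (div_nonneg htpos.le (by positivity))]
    _ ≤ (ENNReal.ofReal t) *
          ∫⁻ ω : Metric.sphere (0:R3) 1, (‖f (x + t • (ω : R3))‖₊ : ℝ≥0∞) ∂sphereMeasure := by
        refine mul_le_mul' (ENNReal.ofReal_le_ofReal ?_)
          (enorm_integral_le_lintegral_enorm _)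
        exact div_le_self htpos.le (by nlinarith [pi_gt_three])
    _ = (ENNReal.ofReal t) *
          ∫⁻ ω : Metric.sphere (0:R3) 1, φ (x + t • (ω : R3)) ∂sphereMeasure := by rw [h2]

lemma kernel_bound (R : ℝ) :
    ∫⁻ z, (Metric.ball (0:R3) R).indicator (fun z => ((‖z‖₊ : ℝ≥0∞))⁻¹) z
      ≤ sigmaU * (ENNReal.ofReal R * ENNReal.ofReal R) := by
  set K : R3 → ℝ≥0∞ := (Metric.ball (0:R3) R).indicator (fun z => ((‖z‖₊ : ℝ≥0∞))⁻¹) with hKdef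
  have hK : Measurable K :=
    ((by fun_prop : Measurable fun z : R3 => ((‖z‖₊ : ℝ≥0∞))⁻¹)).indicator Metric.isOpen_ball.measurableSet
  rw [polar_prod K hK]
  have hGm : Measurable fun p : Metric.sphere (0:R3) 1 × Set.Ioi (0:ℝ) =>
      K ((p.2 : ℝ) • (p.1 : R3)) := hK.comp (by fun_prop)
  rw [lintegral_prod _ hGm.aemeasurable]
  have hinner : ∀ ω : Metric.sphere (0:R3) 1,
      (∫⁻ r : Set.Ioi (0:ℝ), K ((r : ℝ) • (ω : R3)) ∂(Measure.volumeIoiPow 2))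
        ≤ ENNReal.ofReal R * ENNReal.ofReal R := by
    intro ω
    have hdens : Measurable fun r : Set.Ioi (0:ℝ) => ENNReal.ofReal ((r:ℝ)^2) := by fun_prop
    have hmeas2 : Measurable fun r : Set.Ioi (0:ℝ) => K ((r:ℝ) • (ω:R3)) := hK.comp (by fun_prop)
    rw [Measure.volumeIoiPow,
      lintegral_withDensity_eq_lintegral_mul _ hdens hmeas2]
    simp only [Pi.mul_apply]
    rw [lintegral_subtype_comap measurableSet_Ioi
      (fun r : ℝ => ENNReal.ofReal (r^2) * K (r • (ω : R3)))]
    have hbound : ∀ᵐ r ∂((volume : Measure ℝ).restrict (Set.Ioi (0:ℝ))),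
        ENNReal.ofReal (r^2) * K (r • (ω : R3))
          ≤ (Set.Iio R).indicator (fun _ => ENNReal.ofReal R) r := by
      filter_upwards [ae_restrict_mem measurableSet_Ioi] with r hr
      have hr' : (0:ℝ) < r := hr
      have hnorm : ‖r • (ω : R3)‖ = r := by
        rw [norm_smul]; simp [abs_of_pos hr', (mem_sphere_zero_iff_norm.1 ω.2)]
      by_cases hrR : r < R
      · have hmem : r • (ω : R3) ∈ Metric.ball (0:R3) R := by
          rw [Metric.mem_ball, dist_zero_right, hnorm]; exact hrR
        rw [hKdef]
        rw [Set.indicator_of_mem hmem, Set.indicator_of_mem (Set.mem_Iio.2 hrR)]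
        have : ((‖r • (ω : R3)‖₊ : ℝ≥0∞))⁻¹ = (ENNReal.ofReal r)⁻¹ := by
          rw [← enorm_eq_nnnorm, ← ofReal_norm, hnorm]
        rw [this]
        have h2 : ENNReal.ofReal (r^2) = ENNReal.ofReal r * ENNReal.ofReal r := by
          rw [← ENNReal.ofReal_mul hr'.le]; ring_nf
        rw [h2, mul_assoc, ← div_eq_mul_inv]
        calc ENNReal.ofReal r * (ENNReal.ofReal r / ENNReal.ofReal r)
            ≤ ENNReal.ofReal r * 1 := by
              exact mul_le_mul_right ENNReal.div_self_le_one _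
          _ ≤ ENNReal.ofReal R := by
              rw [mul_one]; exact ENNReal.ofReal_le_ofReal hrR.le
      · have hmem : r • (ω : R3) ∉ Metric.ball (0:R3) R := by
          rw [Metric.mem_ball, dist_zero_right, hnorm]; exact hrR
        rw [hKdef, Set.indicator_of_notMem hmem, mul_zero]
        exact zero_le
    calc ∫⁻ r in Set.Ioi (0:ℝ), ENNReal.ofReal (r^2) * K (r • (ω : R3))
        ≤ ∫⁻ r in Set.Ioi (0:ℝ), (Set.Iio R).indicator (fun _ => ENNReal.ofReal R) r :=
          lintegral_mono_ae hbound
      _ = ENNReal.ofReal R * volume (Set.Iio R ∩ Set.Ioi (0:ℝ)) := by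
          rw [lintegral_indicator measurableSet_Iio, setLIntegral_const,
            Measure.restrict_apply measurableSet_Iio]
      _ ≤ ENNReal.ofReal R * ENNReal.ofReal R := by
          refine mul_le_mul_right ?_ _
          rw [Set.Iio_inter_Ioi, Real.volume_Ioo]
          exact ENNReal.ofReal_le_ofReal (by linarith)
  calc ∫⁻ ω : Metric.sphere (0:R3) 1,
        (∫⁻ r : Set.Ioi (0:ℝ), K ((r : ℝ) • (ω : R3)) ∂(Measure.volumeIoiPow 2)) ∂sphereMeasure
      ≤ ∫⁻ _ω : Metric.sphere (0:R3) 1,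
          (ENNReal.ofReal R * ENNReal.ofReal R) ∂sphereMeasure :=
        lintegral_mono fun ω => hinner ω
    _ = sigmaU * (ENNReal.ofReal R * ENNReal.ofReal R) := by
        rw [lintegral_const, mul_comm]; rfl

lemma measure_bound (φ : R3 → ℝ≥0∞) (hφ : Measurable φ) {α : ℝ≥0} (hα : 0 < α)
    (h0 : ∫⁻ y, φ y ≠ 0) (htop : ∫⁻ y, φ y ≠ ∞) :
    ((α:ℝ≥0∞))^3 * volume {x : R3 | (α:ℝ≥0∞) < ∫⁻ y, φ y * ((‖y - x‖₊ : ℝ≥0∞))⁻¹}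
      ≤ 8 * sigmaU * (∫⁻ y, φ y)^3 := by
  set I : ℝ≥0∞ := ∫⁻ y, φ y with hIdef
  have hαR : (0:ℝ) < (α:ℝ) := hα
  have hIℝ : 0 < I.toReal := ENNReal.toReal_pos h0 htop
  set R : ℝ := 2 * I.toReal / (α:ℝ) with hRdef
  have hR : 0 < R := by positivity
  have hofR : ENNReal.ofReal R = 2 * I * ((α:ℝ≥0∞))⁻¹ := by
    rw [hRdef, ENNReal.ofReal_div_of_pos hαR, div_eq_mul_inv]
    congr 1
    · rw [ENNReal.ofReal_mul (by norm_num), ENNReal.ofReal_ofNat, ENNReal.ofReal_toReal htop]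
    · rw [ENNReal.ofReal_coe_nnreal]
  set K : R3 → ℝ≥0∞ := (Metric.ball (0:R3) R).indicator (fun z => ((‖z‖₊ : ℝ≥0∞))⁻¹) with hKdef
  have hK : Measurable K :=
    ((by fun_prop : Measurable fun z : R3 => ((‖z‖₊ : ℝ≥0∞))⁻¹)).indicator
      Metric.isOpen_ball.measurableSet
  set F1 : R3 → ℝ≥0∞ := fun x => ∫⁻ y, φ y * K (y - x) with hF1def
  have hjoint : Measurable fun q : R3 × R3 => φ q.2 * K (q.2 - q.1) :=
    (hφ.comp measurable_snd).mul (hK.comp (measurable_snd.sub measurable_fst))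
  have hF1meas : Measurable F1 :=
    Measurable.lintegral_prod_right (f := fun x y => φ y * K (y - x)) hjoint
  -- splitting
  have hhalf : ∀ x : R3,
      (∫⁻ y, φ y * ((‖y - x‖₊ : ℝ≥0∞))⁻¹) ≤ F1 x + (α:ℝ≥0∞)/2 := by
    intro x
    have hsplit : ∫⁻ y, φ y * ((‖y - x‖₊ : ℝ≥0∞))⁻¹
        = (∫⁻ y in Metric.ball x R, φ y * ((‖y - x‖₊ : ℝ≥0∞))⁻¹)
          + ∫⁻ y in (Metric.ball x R)ᶜ, φ y * ((‖y - x‖₊ : ℝ≥0∞))⁻¹ :=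
      (lintegral_add_compl _ Metric.isOpen_ball.measurableSet).symm
    rw [hsplit]
    refine add_le_add ?_ ?_
    · -- near part equals F1 x
      refine le_of_eq ?_
      rw [← lintegral_indicator Metric.isOpen_ball.measurableSet]
      refine lintegral_congr fun y => ?_
      by_cases hy : y ∈ Metric.ball x R
      · have hy' : y - x ∈ Metric.ball (0:R3) R := by
          rw [Metric.mem_ball, dist_zero_right, ← dist_eq_norm]
          exact Metric.mem_ball.1 hy
        rw [Set.indicator_of_mem hy, hKdef, Set.indicator_of_mem hy']
      · have hy' : y - x ∉ Metric.ball (0:R3) R := by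
          rw [Metric.mem_ball, dist_zero_right, ← dist_eq_norm]
          exact fun h => hy (Metric.mem_ball.2 h)
        rw [Set.indicator_of_notMem hy, hKdef, Set.indicator_of_notMem hy', mul_zero]
    · -- far part is at most α/2
      have h2I0 : (2:ℝ≥0∞) * I ≠ 0 := by
        simp [h0]
      have h2IT : (2:ℝ≥0∞) * I ≠ ∞ := ENNReal.mul_ne_top ENNReal.ofNat_ne_top htop
      calc ∫⁻ y in (Metric.ball x R)ᶜ, φ y * ((‖y - x‖₊ : ℝ≥0∞))⁻¹
          ≤ ∫⁻ y in (Metric.ball x R)ᶜ, φ y * (ENNReal.ofReal R)⁻¹ := by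
            refine lintegral_mono_ae ?_
            filter_upwards [ae_restrict_mem Metric.isOpen_ball.measurableSet.compl] with y hy
            refine mul_le_mul_right (ENNReal.inv_le_inv.2 ?_) _
            rw [← enorm_eq_nnnorm, ← ofReal_norm]
            refine ENNReal.ofReal_le_ofReal ?_
            rw [← dist_eq_norm]
            exact not_lt.1 fun h => hy (Metric.mem_ball.2 h)
        _ ≤ ∫⁻ y, φ y * (ENNReal.ofReal R)⁻¹ := setLIntegral_le_lintegral _ _
        _ = I * (ENNReal.ofReal R)⁻¹ := lintegral_mul_const _ hφ
        _ = (α:ℝ≥0∞)/2 := by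
            rw [hofR, ENNReal.mul_inv (Or.inl h2I0) (Or.inl h2IT), inv_inv,
              ENNReal.mul_inv (Or.inl two_ne_zero) (Or.inl ENNReal.ofNat_ne_top),
              show I * (2⁻¹ * I⁻¹ * (α:ℝ≥0∞)) = (I * I⁻¹) * ((α:ℝ≥0∞) * 2⁻¹) from by ring,
              ENNReal.mul_inv_cancel h0 htop, one_mul, ← div_eq_mul_inv]
  have hsubset : {x : R3 | (α:ℝ≥0∞) < ∫⁻ y, φ y * ((‖y - x‖₊ : ℝ≥0∞))⁻¹}
      ⊆ {x : R3 | (α:ℝ≥0∞)/2 ≤ F1 x} := by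
    intro x hx
    by_contra h
    rw [Set.mem_setOf_eq, not_le] at h
    have hle : (∫⁻ y, φ y * ((‖y - x‖₊ : ℝ≥0∞))⁻¹) ≤ (α:ℝ≥0∞) := by
      calc (∫⁻ y, φ y * ((‖y - x‖₊ : ℝ≥0∞))⁻¹) ≤ F1 x + (α:ℝ≥0∞)/2 := hhalf x
        _ ≤ (α:ℝ≥0∞)/2 + (α:ℝ≥0∞)/2 := add_le_add_left h.le _
        _ = (α:ℝ≥0∞) := ENNReal.add_halves _
    exact absurd hx (not_lt.2 hle)
  have cheb : ((α:ℝ≥0∞)/2) * volume {x : R3 | (α:ℝ≥0∞)/2 ≤ F1 x} ≤ ∫⁻ x, F1 x :=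
    mul_meas_ge_le_lintegral₀ hF1meas.aemeasurable _
  have htransl : ∀ y : R3, (∫⁻ x, K (y - x)) = ∫⁻ z, K z := by
    intro y
    have hg : Measurable fun z : R3 => K (y + z) := hK.comp (measurable_const_add y)
    have h1 : (∫⁻ x : R3, K (y + -x)) = ∫⁻ z : R3, K (y + z) :=
      (Measure.measurePreserving_neg (volume : Measure R3)).lintegral_comp hg
    calc (∫⁻ x, K (y - x)) = ∫⁻ x, K (y + -x) := by simp [sub_eq_add_neg]
      _ = ∫⁻ z, K (y + z) := h1
      _ = ∫⁻ z, K z := lintegral_add_left_eq_self _ y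
  have hint : ∫⁻ x, F1 x ≤ I * (sigmaU * (ENNReal.ofReal R * ENNReal.ofReal R)) := by
    have hswap : ∫⁻ x, F1 x = ∫⁻ y, ∫⁻ x, φ y * K (y - x) := by
      rw [hF1def]
      exact lintegral_lintegral_swap hjoint.aemeasurable
    rw [hswap]
    calc ∫⁻ y, ∫⁻ x, φ y * K (y - x)
        = ∫⁻ y, φ y * ∫⁻ z, K z := by
          refine lintegral_congr fun y => ?_
          have hKy : Measurable fun x : R3 => K (y - x) := hK.comp (by fun_prop)
          rw [lintegral_const_mul _ hKy, htransl y]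
      _ ≤ ∫⁻ y, φ y * (sigmaU * (ENNReal.ofReal R * ENNReal.ofReal R)) :=
          lintegral_mono fun y => mul_le_mul_right (kernel_bound R) _
      _ = I * (sigmaU * (ENNReal.ofReal R * ENNReal.ofReal R)) := lintegral_mul_const _ hφ
  have hαne : ((α:ℝ≥0∞)) ≠ 0 := ENNReal.coe_ne_zero.2 hα.ne'
  set m : ℝ≥0∞ := volume {x : R3 | (α:ℝ≥0∞)/2 ≤ F1 x} with hm
  calc ((α:ℝ≥0∞))^3 * volume {x : R3 | (α:ℝ≥0∞) < ∫⁻ y, φ y * ((‖y - x‖₊ : ℝ≥0∞))⁻¹}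
      ≤ ((α:ℝ≥0∞))^3 * m :=
        mul_le_mul_right (measure_mono hsubset) _
    _ = 2 * ((α:ℝ≥0∞))^2 * (((α:ℝ≥0∞)/2) * m) := by
        rw [show ((α:ℝ≥0∞)/2) = (α:ℝ≥0∞) * 2⁻¹ from div_eq_mul_inv _ _,
          show (2:ℝ≥0∞) * ((α:ℝ≥0∞))^2 * ((α:ℝ≥0∞) * 2⁻¹ * m)
            = (2 * 2⁻¹) * (((α:ℝ≥0∞))^3 * m) from by ring,
          ENNReal.mul_inv_cancel two_ne_zero ENNReal.ofNat_ne_top, one_mul]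
    _ ≤ 2 * ((α:ℝ≥0∞))^2 * (I * (sigmaU * (ENNReal.ofReal R * ENNReal.ofReal R))) :=
        mul_le_mul_right (cheb.trans hint) _
    _ = 8 * sigmaU * I^3 * (((α:ℝ≥0∞) * ((α:ℝ≥0∞))⁻¹) * ((α:ℝ≥0∞) * ((α:ℝ≥0∞))⁻¹)) := by
        rw [hofR]; ring
    _ = 8 * sigmaU * I^3 := by
        rw [ENNReal.mul_inv_cancel hαne ENNReal.coe_ne_top, one_mul, mul_one]

theorem sine_reversed_weakL3_L1_estimate :
    ∃ C : ℝ, 0 < C ∧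
      ∀ f : R3 → ℂ, Integrable f volume →
        weakL3Norm (fun x => ∫⁻ t in Set.Ioi (0 : ℝ), (‖sinProp f t x‖₊ : ℝ≥0∞)) ≤
          ENNReal.ofReal C * ∫⁻ y : R3, (‖f y‖₊ : ℝ≥0∞) := by
  have hCpos : (0:ℝ) < max 1 (8 * sigmaU).toReal := lt_of_lt_of_le one_pos (le_max_left _ _)
  refine ⟨max 1 (8 * sigmaU).toReal, hCpos, ?_⟩
  set C : ℝ := max 1 (8 * sigmaU).toReal with hC
  intro f hf
  have h8T : (8:ℝ≥0∞) * sigmaU ≠ ∞ := ENNReal.mul_ne_top (by norm_num) sigmaU_ne_top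
  have hCbound : ((8:ℝ≥0∞) * sigmaU) ^ ((1:ℝ)/3) ≤ ENNReal.ofReal C := by
    have h1C : (1:ℝ≥0∞) ≤ ENNReal.ofReal C := by
      rw [show (1:ℝ≥0∞) = ENNReal.ofReal 1 from ENNReal.ofReal_one.symm]
      exact ENNReal.ofReal_le_ofReal (le_max_left _ _)
    have hle : (8:ℝ≥0∞) * sigmaU ≤ (ENNReal.ofReal C) ^ (3:ℝ) := by
      calc (8:ℝ≥0∞) * sigmaU ≤ ENNReal.ofReal C := by
            rw [← ENNReal.ofReal_toReal h8T]
            exact ENNReal.ofReal_le_ofReal (le_max_right _ _)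
        _ = (ENNReal.ofReal C) ^ (1:ℝ) := (ENNReal.rpow_one _).symm
        _ ≤ (ENNReal.ofReal C) ^ (3:ℝ) :=
            ENNReal.rpow_le_rpow_of_exponent_le h1C (by norm_num)
    calc ((8:ℝ≥0∞) * sigmaU) ^ ((1:ℝ)/3)
        ≤ ((ENNReal.ofReal C) ^ (3:ℝ)) ^ ((1:ℝ)/3) := ENNReal.rpow_le_rpow hle (by norm_num)
      _ = ENNReal.ofReal C := by
          rw [← ENNReal.rpow_mul]; norm_num
  have hae : AEMeasurable (fun y : R3 => ((‖f y‖₊ : ℝ≥0∞))) volume := hf.1.enorm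
  set φ : R3 → ℝ≥0∞ := hae.mk _ with hφdef
  have hφm : Measurable φ := hae.measurable_mk
  have heq : (fun y : R3 => ((‖f y‖₊ : ℝ≥0∞))) =ᵐ[volume] φ := hae.ae_eq_mk
  have hS0 : volume {y : R3 | ¬ ((‖f y‖₊ : ℝ≥0∞) = φ y)} = 0 := ae_iff.1 heq
  set N : Set R3 := toMeasurable volume {y : R3 | ¬ ((‖f y‖₊ : ℝ≥0∞) = φ y)} with hN
  have hNm : MeasurableSet N := measurableSet_toMeasurable _ _
  have hN0 : volume N = 0 := by rw [hN, measure_toMeasurable]; exact hS0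
  have hfN : ∀ y ∉ N, (‖f y‖₊ : ℝ≥0∞) = φ y :=
    fun y hy => not_not.1 fun h => hy (subset_toMeasurable _ _ h)
  have hIeq : ∫⁻ y : R3, ((‖f y‖₊ : ℝ≥0∞)) = ∫⁻ y, φ y := lintegral_congr_ae heq
  set I : ℝ≥0∞ := ∫⁻ y, φ y with hIdef
  have hbound := pointwise_bound f φ hφm hNm hN0 hfN
  rw [hIeq, weakL3Norm]
  refine iSup_le fun α => iSup_le fun hα => ?_
  by_cases hI0 : I = 0
  · have hφ0 : ∀ᵐ y ∂(volume : Measure R3), φ y = 0 := (lintegral_eq_zero_iff hφm).1 hI0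
    have hF0 : ∀ x : R3, (∫⁻ y, φ y * ((‖y - x‖₊ : ℝ≥0∞))⁻¹) = 0 := by
      intro x
      calc ∫⁻ y, φ y * ((‖y - x‖₊ : ℝ≥0∞))⁻¹ = ∫⁻ _y : R3, (0:ℝ≥0∞) :=
            lintegral_congr_ae (hφ0.mono fun y hy => by simp [hy])
        _ = 0 := lintegral_zero
    have hempty : {x : R3 | (α:ℝ≥0∞) <
        (fun x => ∫⁻ t in Set.Ioi (0:ℝ), (‖sinProp f t x‖₊ : ℝ≥0∞)) x} = ∅ := by
      ext x
      simp only [Set.mem_setOf_eq, Set.mem_empty_iff_false, iff_false, not_lt]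
      exact le_trans ((hbound x).trans (hF0 x).le) zero_le
    rw [hempty, measure_empty, ENNReal.zero_rpow_of_pos (by norm_num), mul_zero]
    exact zero_le
  by_cases hItop : I = ∞
  · rw [hItop, ENNReal.mul_top (ENNReal.ofReal_pos.2 hCpos).ne']
    exact le_top
  · have hmb := measure_bound φ hφm hα hI0 hItop
    rw [← hIdef] at hmb
    have hmono : volume {x : R3 | (α:ℝ≥0∞) <
          (fun x => ∫⁻ t in Set.Ioi (0:ℝ), (‖sinProp f t x‖₊ : ℝ≥0∞)) x}
        ≤ volume {x : R3 | (α:ℝ≥0∞) < ∫⁻ y, φ y * ((‖y - x‖₊ : ℝ≥0∞))⁻¹} :=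
      measure_mono fun x hx => lt_of_lt_of_le hx (hbound x)
    set v : ℝ≥0∞ := volume {x : R3 | (α:ℝ≥0∞) <
      (fun x => ∫⁻ t in Set.Ioi (0:ℝ), (‖sinProp f t x‖₊ : ℝ≥0∞)) x} with hv
    have hsplit : (((α:ℝ≥0∞))^3 * v) ^ ((1:ℝ)/3) = (α:ℝ≥0∞) * v ^ ((1:ℝ)/3) := by
      rw [ENNReal.mul_rpow_of_nonneg _ _ (by norm_num : (0:ℝ) ≤ 1/3)]
      congr 1
      rw [← ENNReal.rpow_natCast ((α:ℝ≥0∞)) 3, ← ENNReal.rpow_mul]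
      norm_num
    have hsplit2 : ((8:ℝ≥0∞) * sigmaU * I^3) ^ ((1:ℝ)/3)
        = ((8:ℝ≥0∞) * sigmaU) ^ ((1:ℝ)/3) * I := by
      rw [ENNReal.mul_rpow_of_nonneg _ _ (by norm_num : (0:ℝ) ≤ 1/3)]
      congr 1
      rw [← ENNReal.rpow_natCast I 3, ← ENNReal.rpow_mul]
      norm_num
    calc (α:ℝ≥0∞) * v ^ ((1:ℝ)/3)
        = (((α:ℝ≥0∞))^3 * v) ^ ((1:ℝ)/3) := hsplit.symm
      _ ≤ ((8:ℝ≥0∞) * sigmaU * I^3) ^ ((1:ℝ)/3) :=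
          ENNReal.rpow_le_rpow ((mul_le_mul_right hmono _).trans hmb) (by norm_num)
      _ = ((8:ℝ≥0∞) * sigmaU) ^ ((1:ℝ)/3) * I := hsplit2
      _ ≤ ENNReal.ofReal C * I := mul_le_mul_left hCbound _
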